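/- For y ∈ W^{1,2}(-1,1) with ∫_{-1}^{1} y dt = 0 and ∫_{-1}^{1} t·y dt = 0 (i.e., m = 2), at the point x = 0 the sharp constant in |y(0)| ≤ B ( ∫_{-1}^{1}|y'|^2 dt )^{1/2} is B = 1/√6, the same as the sharp constant for m = 1 at x = 0. -/

import Mathlib

/-- `W12 y g` : `y` is absolutely continuous on `[-1,1]` with derivative `g ∈ L²(-1,1)`. -/
def W12 (y g : ℝ → ℝ) : Prop :=
  IntervalIntegrable g MeasureTheory.volume (-1) 1 ∧
  IntervalIntegrable (fun t => g t ^ 2) MeasureTheory.volume (-1) 1 ∧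
  ∀ t ∈ Set.Icc (-1 : ℝ) 1, y t = y (-1) + ∫ s in (-1 : ℝ)..t, g s

open MeasureTheory Set intervalIntegral

lemma int_congr_Ioc {f h : ℝ → ℝ} {a b : ℝ} (hab : a ≤ b) (heq : EqOn f h (Ioc a b)) :
    ∫ t in a..b, f t = ∫ t in a..b, h t := by
  rw [integral_of_le hab, integral_of_le hab]
  exact setIntegral_congr_fun measurableSet_Ioc heq

lemma ii_congr_Ioc {f h : ℝ → ℝ} {a b : ℝ} (hab : a ≤ b)
    (hf : IntervalIntegrable f volume a b) (heq : EqOn f h (Ioc a b)) :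
    IntervalIntegrable h volume a b := by
  rw [intervalIntegrable_iff_integrableOn_Ioc_of_le hab] at hf ⊢
  exact hf.congr_fun heq measurableSet_Ioc

lemma fubini_key {g : ℝ → ℝ} (hg : IntervalIntegrable g volume (-1) 1) :
    (∫ t in (-1:ℝ)..1, ∫ s in (-1:ℝ)..t, g s) = ∫ s in (-1:ℝ)..1, (1 - s) * g s := by
  have h1 : (-1:ℝ) ≤ 1 := by norm_num
  have hgI : IntegrableOn g (Ioc (-1:ℝ) 1) volume :=
    (intervalIntegrable_iff_integrableOn_Ioc_of_le h1).1 hg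
  set μ := volume.restrict (Ioc (-1:ℝ) 1) with hμ
  haveI : IsFiniteMeasure μ :=
    ⟨by rw [hμ, Measure.restrict_apply_univ, Real.volume_Ioc]; exact ENNReal.ofReal_lt_top⟩
  set f : ℝ → ℝ → ℝ := fun t s => if s ≤ t then g s else 0 with hf
  have huncurry : Function.uncurry f = ({p : ℝ × ℝ | p.2 ≤ p.1}).indicator (fun p => g p.2) := by
    funext p
    by_cases h : p.2 ≤ p.1 <;> simp [Function.uncurry, hf, h, Set.indicator_apply]
  have hsm : AEStronglyMeasurable (fun p : ℝ × ℝ => g p.2) (μ.prod μ) :=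
    hgI.aestronglyMeasurable.comp_snd
  have hmeas : AEStronglyMeasurable (Function.uncurry f) (μ.prod μ) := by
    rw [huncurry]
    exact hsm.indicator (measurableSet_le measurable_snd measurable_fst)
  have hbd : Integrable (fun p : ℝ × ℝ => (1:ℝ) * g p.2) (μ.prod μ) :=
    (integrable_const (1:ℝ)).mul_prod hgI
  have hint : Integrable (Function.uncurry f) (μ.prod μ) := by
    refine Integrable.mono' hbd.norm hmeas ?_
    filter_upwards with p
    by_cases h : p.2 ≤ p.1 <;> simp [Function.uncurry, hf, h, abs_nonneg]
  have swap := MeasureTheory.integral_integral_swap hint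
  -- LHS
  have hL : (∫ t, ∫ s, f t s ∂μ ∂μ) = ∫ t in (-1:ℝ)..1, ∫ s in (-1:ℝ)..t, g s := by
    rw [integral_of_le h1]
    refine setIntegral_congr_fun measurableSet_Ioc fun t ht => ?_
    have : ∫ s, f t s ∂μ = ∫ s, (Iic t).indicator g s ∂μ := by
      refine integral_congr_ae (Filter.Eventually.of_forall fun s => ?_)
      by_cases h : s ≤ t <;> simp [hf, h, Set.indicator_apply]
    rw [this, MeasureTheory.integral_indicator measurableSet_Iic, hμ,
      Measure.restrict_restrict measurableSet_Iic]
    have hset : Iic t ∩ Ioc (-1:ℝ) 1 = Ioc (-1) t := by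
      ext s
      simp only [mem_inter_iff, mem_Iic, mem_Ioc]
      exact ⟨fun ⟨a, b, _⟩ => ⟨b, a⟩, fun ⟨a, b⟩ => ⟨b, a, b.trans ht.2⟩⟩
    rw [hset, integral_of_le ht.1.le]
  -- RHS
  have hR : (∫ s, ∫ t, f t s ∂μ ∂μ) = ∫ s in (-1:ℝ)..1, (1 - s) * g s := by
    rw [integral_of_le h1]
    refine setIntegral_congr_fun measurableSet_Ioc fun s hs => ?_
    have : ∫ t, f t s ∂μ = ∫ t, (Ici s).indicator (fun _ => g s) t ∂μ := by
      refine integral_congr_ae (Filter.Eventually.of_forall fun t => ?_)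
      by_cases h : s ≤ t <;> simp [hf, h, Set.indicator_apply]
    rw [this, MeasureTheory.integral_indicator measurableSet_Ici, hμ,
      Measure.restrict_restrict measurableSet_Ici]
    have hset : Ici s ∩ Ioc (-1:ℝ) 1 = Icc s 1 := by
      ext t
      simp only [mem_inter_iff, mem_Ici, mem_Ioc, mem_Icc]
      exact ⟨fun ⟨a, _, c⟩ => ⟨a, c⟩, fun ⟨a, b⟩ => ⟨a, hs.1.trans_le a, b⟩⟩
    rw [hset, setIntegral_const, Real.volume_real_Icc_of_le (by linarith [hs.2]), smul_eq_mul]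
  rw [← hL, ← hR]
  exact swap

noncomputable def Kk (s : ℝ) : ℝ := (if s ≤ 0 then 1 else 0) - (1 - s) / 2

lemma repr_lemma {y g : ℝ → ℝ} (h : W12 y g) (h0 : (∫ t in (-1:ℝ)..1, y t) = 0) :
    y 0 = ∫ s in (-1:ℝ)..1, Kk s * g s := by
  obtain ⟨hg, hg2, hy⟩ := h
  have h1 : (-1:ℝ) ≤ 1 := by norm_num
  set F : ℝ → ℝ := fun t => ∫ s in (-1:ℝ)..t, g s with hF
  have hFcont : ContinuousOn F (uIcc (-1:ℝ) 1) :=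
    intervalIntegral.continuousOn_primitive_interval' hg left_mem_uIcc
  have hFii : IntervalIntegrable F volume (-1) 1 := hFcont.intervalIntegrable
  have hyint : (∫ t in (-1:ℝ)..1, y t) = ∫ t in (-1:ℝ)..1, (y (-1) + F t) := by
    refine intervalIntegral.integral_congr ?_
    rw [uIcc_of_le h1]
    exact fun t ht => hy t ht
  rw [intervalIntegral.integral_add (intervalIntegrable_const) hFii,
    intervalIntegral.integral_const, fubini_key hg, h0] at hyint
  -- hyint : 0 = (1 - -1) • y (-1) + ∫ (1-s) g
  have hm1 : y (-1) = -(∫ s in (-1:ℝ)..1, (1 - s) * g s) / 2 := by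
    rw [smul_eq_mul] at hyint; linarith [hyint]
  have hy0 : y 0 = y (-1) + F 0 := hy 0 (by constructor <;> norm_num)
  -- F 0 = ∫ χ g
  have hgl : IntervalIntegrable g volume (-1) 0 :=
    hg.mono_set (by rw [uIcc_of_le (by norm_num : (-1:ℝ) ≤ 0), uIcc_of_le h1]; exact Icc_subset_Icc le_rfl (by norm_num))
  have hgr : IntervalIntegrable g volume 0 1 :=
    hg.mono_set (by rw [uIcc_of_le (by norm_num : (0:ℝ) ≤ 1), uIcc_of_le h1]; exact Icc_subset_Icc (by norm_num) le_rfl)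
  have hχl : IntervalIntegrable (fun s => (if s ≤ 0 then (1:ℝ) else 0) * g s) volume (-1) 0 := by
    refine ii_congr_Ioc (by norm_num) hgl fun s hs => ?_
    simp [hs.2]
  have hχr : IntervalIntegrable (fun s => (if s ≤ 0 then (1:ℝ) else 0) * g s) volume 0 1 := by
    refine ii_congr_Ioc (by norm_num) (_root_.intervalIntegrable_const (c := (0:ℝ))) fun s hs => ?_
    simp [not_le.2 hs.1]
  have hχ : IntervalIntegrable (fun s => (if s ≤ 0 then (1:ℝ) else 0) * g s) volume (-1) 1 :=
    hχl.trans hχr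
  have hF0 : F 0 = ∫ s in (-1:ℝ)..1, (if s ≤ 0 then (1:ℝ) else 0) * g s := by
    have e1 : (∫ s in (-1:ℝ)..0, (if s ≤ 0 then (1:ℝ) else 0) * g s) = ∫ s in (-1:ℝ)..0, g s := by
      refine int_congr_Ioc (by norm_num) fun s hs => ?_
      simp [hs.2]
    have e2 : (∫ s in (0:ℝ)..1, (if s ≤ 0 then (1:ℝ) else 0) * g s) = ∫ s in (0:ℝ)..1, (0:ℝ) := by
      refine int_congr_Ioc (by norm_num) fun s hs => ?_
      simp [not_le.2 hs.1]
    rw [← intervalIntegral.integral_add_adjacent_intervals hχl hχr, e1, e2]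
    simp [hF]
  have hlin : IntervalIntegrable (fun s => (1 - s) / 2 * g s) volume (-1) 1 := by
    refine hg.continuousOn_mul ?_
    exact ((continuous_const.sub continuous_id).div_const 2).continuousOn
  have : y 0 = (∫ s in (-1:ℝ)..1, (if s ≤ 0 then (1:ℝ) else 0) * g s)
      - ∫ s in (-1:ℝ)..1, (1 - s) / 2 * g s := by
    rw [hy0, hF0, hm1]
    have : (∫ s in (-1:ℝ)..1, (1 - s) / 2 * g s)
        = (1/2) * ∫ s in (-1:ℝ)..1, (1 - s) * g s := by
      rw [← intervalIntegral.integral_const_mul]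
      refine intervalIntegral.integral_congr fun s _ => by ring
    rw [this]; ring
  rw [this, ← intervalIntegral.integral_sub hχ hlin]
  refine intervalIntegral.integral_congr fun s _ => ?_
  simp only [Kk]; ring

lemma ftc_poly {P p : ℝ → ℝ} {a b : ℝ} (hP : ∀ t, HasDerivAt P (p t) t) (hp : Continuous p) :
    ∫ t in a..b, p t = P b - P a :=
  intervalIntegral.integral_eq_sub_of_hasDerivAt (fun t _ => hP t) (hp.intervalIntegrable a b)

lemma Kk_meas : Measurable Kk := by
  unfold Kk
  exact (Measurable.ite measurableSet_Iic measurable_const measurable_const).sub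
    ((measurable_const.sub measurable_id).div_const 2)

lemma Kk_sq_integral : (∫ s in (-1:ℝ)..1, Kk s ^ 2) = 1 / 6 := by
  have hl : ∀ s : ℝ, HasDerivAt (fun u : ℝ => (1+u)^3/12) (((1+s)/2)^2) s := by
    intro s
    have := (((hasDerivAt_id s).const_add (1:ℝ)).pow 3).div_const 12
    refine this.congr_deriv ?_; simp only [id_eq]; ring
  have hr : ∀ s : ℝ, HasDerivAt (fun u : ℝ => (u-1)^3/12) (((s-1)/2)^2) s := by
    intro s
    have := (((hasDerivAt_id s).sub_const (1:ℝ)).pow 3).div_const 12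
    refine this.congr_deriv ?_; simp only [id_eq]; ring
  have cl : Continuous (fun s : ℝ => ((1+s)/2)^2) := by continuity
  have cr : Continuous (fun s : ℝ => ((s-1)/2)^2) := by continuity
  have e1 : (∫ s in (-1:ℝ)..0, Kk s ^ 2) = ∫ s in (-1:ℝ)..0, ((1+s)/2)^2 := by
    refine int_congr_Ioc (by norm_num) fun s hs => ?_
    simp only [Kk, if_pos hs.2]; ring
  have e2 : (∫ s in (0:ℝ)..1, Kk s ^ 2) = ∫ s in (0:ℝ)..1, ((s-1)/2)^2 := by
    refine int_congr_Ioc (by norm_num) fun s hs => ?_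
    simp only [Kk, if_neg (not_le.2 hs.1)]; ring
  have iil : IntervalIntegrable (fun s => Kk s ^ 2) volume (-1) 0 := by
    refine ii_congr_Ioc (by norm_num) (cl.intervalIntegrable _ _) fun s hs => ?_
    simp only [Kk, if_pos hs.2]; ring
  have iir : IntervalIntegrable (fun s => Kk s ^ 2) volume 0 1 := by
    refine ii_congr_Ioc (by norm_num) (cr.intervalIntegrable _ _) fun s hs => ?_
    simp only [Kk, if_neg (not_le.2 hs.1)]; ring
  rw [← intervalIntegral.integral_add_adjacent_intervals iil iir, e1, e2,
    ftc_poly hl cl, ftc_poly hr cr]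
  norm_num

lemma Kk_bound {s : ℝ} (hs : s ∈ Ioc (-1:ℝ) 1) : |Kk s| ≤ 1 := by
  unfold Kk
  rcases hs with ⟨h1, h2⟩
  rw [abs_le]
  by_cases h : s ≤ 0 <;> simp only [h, if_true, if_false] <;> constructor <;> nlinarith

lemma cauchy_schwarz_Kg {g : ℝ → ℝ}
    (hg : IntervalIntegrable g volume (-1) 1)
    (hg2 : IntervalIntegrable (fun t => g t ^ 2) volume (-1) 1) :
    |∫ s in (-1:ℝ)..1, Kk s * g s| ≤
      Real.sqrt 6 / 6 * Real.sqrt (∫ t in (-1:ℝ)..1, (g t) ^ 2) := by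
  have h1 : (-1:ℝ) ≤ 1 := by norm_num
  set μ := volume.restrict (Ioc (-1:ℝ) 1) with hμ
  haveI : IsFiniteMeasure μ :=
    ⟨by rw [hμ, Measure.restrict_apply_univ, Real.volume_Ioc]; exact ENNReal.ofReal_lt_top⟩
  have hgI : Integrable g μ := (intervalIntegrable_iff_integrableOn_Ioc_of_le h1).1 hg
  have hg2I : Integrable (fun t => g t ^ 2) μ :=
    (intervalIntegrable_iff_integrableOn_Ioc_of_le h1).1 hg2
  have hKsm : AEStronglyMeasurable Kk μ := Kk_meas.aestronglyMeasurable
  have hK2I : Integrable (fun s => Kk s ^ 2) μ := by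
    refine Integrable.mono' (integrable_const (1:ℝ)) ((Kk_meas.pow_const 2).aestronglyMeasurable) ?_
    filter_upwards [ae_restrict_mem measurableSet_Ioc] with s hs
    have := Kk_bound hs
    rw [Real.norm_eq_abs, abs_pow]
    calc |Kk s| ^ 2 ≤ 1 ^ 2 := pow_le_pow_left₀ (abs_nonneg _) this 2
    _ = 1 := one_pow 2
  have hKmem : MemLp Kk (ENNReal.ofReal 2) μ := by
    rw [show ENNReal.ofReal 2 = 2 by norm_num]
    exact (memLp_two_iff_integrable_sq hKsm).2 hK2I
  have hGmem : MemLp g (ENNReal.ofReal 2) μ := by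
    rw [show ENNReal.ofReal 2 = 2 by norm_num]
    exact (memLp_two_iff_integrable_sq hgI.1).2 hg2I
  have hpq : Real.HolderConjugate 2 2 := Real.HolderConjugate.two_two
  have CS := MeasureTheory.integral_mul_norm_le_Lp_mul_Lq hpq hKmem hGmem
  have habs : |∫ s in (-1:ℝ)..1, Kk s * g s| ≤ ∫ a, ‖Kk a‖ * ‖g a‖ ∂μ := by
    rw [intervalIntegral.integral_of_le h1]
    calc |∫ s in Ioc (-1:ℝ) 1, Kk s * g s| = ‖∫ s in Ioc (-1:ℝ) 1, Kk s * g s‖ :=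
        (Real.norm_eq_abs _).symm
    _ ≤ ∫ s in Ioc (-1:ℝ) 1, ‖Kk s * g s‖ := MeasureTheory.norm_integral_le_integral_norm _
    _ = ∫ a, ‖Kk a‖ * ‖g a‖ ∂μ := by
        refine integral_congr_ae (Filter.Eventually.of_forall fun s => ?_)
        simp [norm_mul]
  have hrw : ∀ f : ℝ → ℝ, (∫ a, ‖f a‖ ^ (2:ℝ) ∂μ) = ∫ a, f a ^ 2 ∂μ := by
    intro f
    refine integral_congr_ae (Filter.Eventually.of_forall fun s => ?_)
    show ‖f s‖ ^ (2:ℝ) = f s ^ 2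
    rw [show ((2:ℝ)) = ((2:ℕ):ℝ) from by norm_num, Real.rpow_natCast, Real.norm_eq_abs, sq_abs]
  rw [hrw, hrw] at CS
  have hKint : (∫ a, Kk a ^ 2 ∂μ) = 1/6 := by
    rw [hμ, ← intervalIntegral.integral_of_le h1]
    exact Kk_sq_integral
  have hgint : (∫ a, g a ^ 2 ∂μ) = ∫ t in (-1:ℝ)..1, g t ^ 2 := by
    rw [hμ, ← intervalIntegral.integral_of_le h1]
  rw [hKint, hgint] at CS
  have hsix : ((1:ℝ)/6) ^ ((1:ℝ)/2) = Real.sqrt 6 / 6 := by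
    rw [← Real.sqrt_eq_rpow, show ((1:ℝ)/6) = 6/36 by norm_num,
      Real.sqrt_div (by norm_num : (0:ℝ) ≤ 6),
      show Real.sqrt 36 = 6 by rw [show (36:ℝ) = 6^2 by norm_num, Real.sqrt_sq (by norm_num)]]
  have hg12 : (∫ t in (-1:ℝ)..1, g t ^ 2) ^ ((1:ℝ)/2) = Real.sqrt (∫ t in (-1:ℝ)..1, g t ^ 2) :=
    (Real.sqrt_eq_rpow _).symm
  calc |∫ s in (-1:ℝ)..1, Kk s * g s| ≤ ∫ a, ‖Kk a‖ * ‖g a‖ ∂μ := habs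
  _ ≤ ((1:ℝ)/6) ^ ((1:ℝ)/2) * (∫ t in (-1:ℝ)..1, g t ^ 2) ^ ((1:ℝ)/2) := CS
  _ = Real.sqrt 6 / 6 * Real.sqrt (∫ t in (-1:ℝ)..1, g t ^ 2) := by rw [hsix, hg12]

noncomputable def gex (t : ℝ) : ℝ := if t ≤ 0 then t + 1 else t - 1
noncomputable def yex (t : ℝ) : ℝ := if t ≤ 0 then (t+1)^2/2 - 1/6 else (t-1)^2/2 - 1/6

lemma gex_iil {t : ℝ} (ht : t ≤ 0) (ht1 : -1 ≤ t) : IntervalIntegrable gex volume (-1) t := by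
  refine ii_congr_Ioc (f := fun s => s + 1) ht1
    ((by continuity : Continuous fun s : ℝ => s + 1).intervalIntegrable _ _) fun s hs => ?_
  simp [gex, hs.2.trans ht]

lemma gex_iir {t : ℝ} (ht : 0 ≤ t) : IntervalIntegrable gex volume 0 t := by
  refine ii_congr_Ioc (f := fun s => s - 1) ht
    ((by continuity : Continuous fun s : ℝ => s - 1).intervalIntegrable _ _) fun s hs => ?_
  simp [gex, not_le.2 hs.1]

lemma hd1 (s : ℝ) : HasDerivAt (fun u : ℝ => (u+1)^2/2) (s+1) s := by
  have := (((hasDerivAt_id s).add_const (1:ℝ)).pow 2).div_const 2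
  refine this.congr_deriv ?_; simp only [id_eq]; ring

lemma hd2 (s : ℝ) : HasDerivAt (fun u : ℝ => (u-1)^2/2) (s-1) s := by
  have := (((hasDerivAt_id s).sub_const (1:ℝ)).pow 2).div_const 2
  refine this.congr_deriv ?_; simp only [id_eq]; ring

lemma gex_int_left {t : ℝ} (ht : t ≤ 0) (ht1 : -1 ≤ t) :
    (∫ s in (-1:ℝ)..t, gex s) = (t+1)^2/2 := by
  have e : (∫ s in (-1:ℝ)..t, gex s) = ∫ s in (-1:ℝ)..t, (s+1) := by
    refine int_congr_Ioc ht1 fun s hs => ?_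
    simp [gex, hs.2.trans ht]
  rw [e, ftc_poly hd1 (by continuity)]
  norm_num

lemma gex_int_right {t : ℝ} (ht : 0 ≤ t) :
    (∫ s in (0:ℝ)..t, gex s) = (t-1)^2/2 - 1/2 := by
  have e : (∫ s in (0:ℝ)..t, gex s) = ∫ s in (0:ℝ)..t, (s-1) := by
    refine int_congr_Ioc ht fun s hs => ?_
    simp [gex, not_le.2 hs.1]
  rw [e, ftc_poly hd2 (by continuity)]
  norm_num

lemma W12_ex : W12 yex gex := by
  refine ⟨(gex_iil le_rfl (by norm_num)).trans (gex_iir (by norm_num)), ?_, ?_⟩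
  · have l : IntervalIntegrable (fun t => gex t ^ 2) volume (-1) 0 := by
      refine ii_congr_Ioc (f := fun s => (s+1)^2) (by norm_num)
        ((by continuity : Continuous fun s : ℝ => (s+1)^2).intervalIntegrable _ _) fun s hs => ?_
      simp [gex, hs.2]
    have r : IntervalIntegrable (fun t => gex t ^ 2) volume 0 1 := by
      refine ii_congr_Ioc (f := fun s => (s-1)^2) (by norm_num)
        ((by continuity : Continuous fun s : ℝ => (s-1)^2).intervalIntegrable _ _) fun s hs => ?_
      simp [gex, not_le.2 hs.1]
    exact l.trans r
  · intro t ht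
    have hm : yex (-1) = -(1/6) := by norm_num [yex]
    by_cases h : t ≤ 0
    · rw [hm, gex_int_left h ht.1]
      simp [yex, h]; ring
    · have h' : (0:ℝ) ≤ t := le_of_lt (not_le.1 h)
      rw [hm, ← intervalIntegral.integral_add_adjacent_intervals (gex_iil le_rfl (by norm_num)) (gex_iir h'),
        gex_int_left le_rfl (by norm_num), gex_int_right h']
      simp [yex, h]; ring

lemma yex_int : (∫ t in (-1:ℝ)..1, yex t) = 0 := by
  have hdl : ∀ s : ℝ, HasDerivAt (fun u : ℝ => (u+1)^3/6 - u/6) ((s+1)^2/2 - 1/6) s := by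
    intro s
    have := ((((hasDerivAt_id s).add_const (1:ℝ)).pow 3).div_const 6).sub
      ((hasDerivAt_id s).div_const 6)
    refine this.congr_deriv ?_; simp only [id_eq]; ring
  have hdr : ∀ s : ℝ, HasDerivAt (fun u : ℝ => (u-1)^3/6 - u/6) ((s-1)^2/2 - 1/6) s := by
    intro s
    have := ((((hasDerivAt_id s).sub_const (1:ℝ)).pow 3).div_const 6).sub
      ((hasDerivAt_id s).div_const 6)
    refine this.congr_deriv ?_; simp only [id_eq]; ring
  have cl : Continuous (fun s : ℝ => (s+1)^2/2 - 1/6) := by continuity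
  have cr : Continuous (fun s : ℝ => (s-1)^2/2 - 1/6) := by continuity
  have el : (∫ t in (-1:ℝ)..0, yex t) = ∫ t in (-1:ℝ)..0, ((t+1)^2/2 - 1/6) :=
    int_congr_Ioc (by norm_num) fun s hs => by simp [yex, hs.2]
  have er : (∫ t in (0:ℝ)..1, yex t) = ∫ t in (0:ℝ)..1, ((t-1)^2/2 - 1/6) :=
    int_congr_Ioc (by norm_num) fun s hs => by simp [yex, not_le.2 hs.1]
  have iil : IntervalIntegrable yex volume (-1) 0 :=
    ii_congr_Ioc (by norm_num) (cl.intervalIntegrable _ _) fun s hs => by simp [yex, hs.2]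
  have iir : IntervalIntegrable yex volume 0 1 :=
    ii_congr_Ioc (by norm_num) (cr.intervalIntegrable _ _) fun s hs => by simp [yex, not_le.2 hs.1]
  rw [← intervalIntegral.integral_add_adjacent_intervals iil iir, el, er,
    ftc_poly hdl cl, ftc_poly hdr cr]
  norm_num

lemma yex_moment : (∫ t in (-1:ℝ)..1, t * yex t) = 0 := by
  have hdl : ∀ s : ℝ, HasDerivAt (fun u : ℝ => u^4/8 + u^3/3 + u^2/6) (s * ((s+1)^2/2 - 1/6)) s := by
    intro s
    have := (((hasDerivAt_pow 4 s).div_const 8).add ((hasDerivAt_pow 3 s).div_const 3)).add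
      ((hasDerivAt_pow 2 s).div_const 6)
    refine this.congr_deriv ?_; push_cast; ring
  have hdr : ∀ s : ℝ, HasDerivAt (fun u : ℝ => u^4/8 - u^3/3 + u^2/6) (s * ((s-1)^2/2 - 1/6)) s := by
    intro s
    have := (((hasDerivAt_pow 4 s).div_const 8).sub ((hasDerivAt_pow 3 s).div_const 3)).add
      ((hasDerivAt_pow 2 s).div_const 6)
    refine this.congr_deriv ?_; push_cast; ring
  have cl : Continuous (fun s : ℝ => s * ((s+1)^2/2 - 1/6)) := by continuity
  have cr : Continuous (fun s : ℝ => s * ((s-1)^2/2 - 1/6)) := by continuity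
  have el : (∫ t in (-1:ℝ)..0, t * yex t) = ∫ t in (-1:ℝ)..0, t * ((t+1)^2/2 - 1/6) :=
    int_congr_Ioc (by norm_num) fun s hs => by simp [yex, hs.2]
  have er : (∫ t in (0:ℝ)..1, t * yex t) = ∫ t in (0:ℝ)..1, t * ((t-1)^2/2 - 1/6) :=
    int_congr_Ioc (by norm_num) fun s hs => by simp [yex, not_le.2 hs.1]
  have iil : IntervalIntegrable (fun t => t * yex t) volume (-1) 0 :=
    ii_congr_Ioc (by norm_num) (cl.intervalIntegrable _ _) fun s hs => by simp [yex, hs.2]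
  have iir : IntervalIntegrable (fun t => t * yex t) volume 0 1 :=
    ii_congr_Ioc (by norm_num) (cr.intervalIntegrable _ _) fun s hs => by simp [yex, not_le.2 hs.1]
  rw [← intervalIntegral.integral_add_adjacent_intervals iil iir, el, er,
    ftc_poly hdl cl, ftc_poly hdr cr]
  norm_num

lemma gex_sq_int : (∫ t in (-1:ℝ)..1, gex t ^ 2) = 2/3 := by
  have hdl : ∀ s : ℝ, HasDerivAt (fun u : ℝ => (u+1)^3/3) ((s+1)^2) s := by
    intro s
    have := (((hasDerivAt_id s).add_const (1:ℝ)).pow 3).div_const 3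
    refine this.congr_deriv ?_; simp only [id_eq]; ring
  have hdr : ∀ s : ℝ, HasDerivAt (fun u : ℝ => (u-1)^3/3) ((s-1)^2) s := by
    intro s
    have := (((hasDerivAt_id s).sub_const (1:ℝ)).pow 3).div_const 3
    refine this.congr_deriv ?_; simp only [id_eq]; ring
  have cl : Continuous (fun s : ℝ => (s+1)^2) := by continuity
  have cr : Continuous (fun s : ℝ => (s-1)^2) := by continuity
  have el : (∫ t in (-1:ℝ)..0, gex t ^ 2) = ∫ t in (-1:ℝ)..0, (t+1)^2 :=
    int_congr_Ioc (by norm_num) fun s hs => by simp [gex, hs.2]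
  have er : (∫ t in (0:ℝ)..1, gex t ^ 2) = ∫ t in (0:ℝ)..1, (t-1)^2 :=
    int_congr_Ioc (by norm_num) fun s hs => by simp [gex, not_le.2 hs.1]
  have iil : IntervalIntegrable (fun t => gex t ^ 2) volume (-1) 0 :=
    ii_congr_Ioc (by norm_num) (cl.intervalIntegrable _ _) fun s hs => by simp [gex, hs.2]
  have iir : IntervalIntegrable (fun t => gex t ^ 2) volume 0 1 :=
    ii_congr_Ioc (by norm_num) (cr.intervalIntegrable _ _) fun s hs => by simp [gex, not_le.2 hs.1]
  rw [← intervalIntegral.integral_add_adjacent_intervals iil iir, el, er,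
    ftc_poly hdl cl, ftc_poly hdr cr]
  norm_num

lemma lower_bound (B : ℝ)
    (hB : ∀ y g : ℝ → ℝ, W12 y g → (∫ t in (-1:ℝ)..1, y t) = 0 →
      (∫ t in (-1:ℝ)..1, t * y t) = 0 →
      |y 0| ≤ B * Real.sqrt (∫ t in (-1:ℝ)..1, (g t) ^ 2)) :
    Real.sqrt 6 / 6 ≤ B := by
  have h := hB yex gex W12_ex yex_int yex_moment
  rw [gex_sq_int] at h
  have hy0 : yex 0 = 1/3 := by norm_num [yex]
  rw [hy0, abs_of_pos (by norm_num)] at h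
  have hc : (0:ℝ) < Real.sqrt (2/3) := Real.sqrt_pos.2 (by norm_num)
  have key : Real.sqrt 6 / 6 * Real.sqrt (2/3) = 1/3 := by
    rw [div_mul_eq_mul_div, ← Real.sqrt_mul (by norm_num : (0:ℝ) ≤ 6),
      show (6:ℝ) * (2/3) = 4 by norm_num,
      show Real.sqrt 4 = 2 by rw [show (4:ℝ) = 2^2 by norm_num, Real.sqrt_sq (by norm_num)]]
    norm_num
  have : Real.sqrt 6 / 6 * Real.sqrt (2/3) ≤ B * Real.sqrt (2/3) := by rw [key]; exact h
  exact le_of_mul_le_mul_right this hc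

lemma upper_bound {y g : ℝ → ℝ} (h : W12 y g) (h0 : (∫ t in (-1:ℝ)..1, y t) = 0) :
    |y 0| ≤ Real.sqrt 6 / 6 * Real.sqrt (∫ t in (-1:ℝ)..1, (g t) ^ 2) := by
  rw [repr_lemma h h0]
  exact cauchy_schwarz_Kg h.1 h.2.1

theorem B1_eq_B2_at_zero :
    (∀ y g : ℝ → ℝ, W12 y g → (∫ t in (-1:ℝ)..1, y t) = 0 →
      |y 0| ≤ Real.sqrt 6 / 6 * Real.sqrt (∫ t in (-1:ℝ)..1, (g t) ^ 2)) ∧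
    (∀ B : ℝ,
      (∀ y g : ℝ → ℝ, W12 y g → (∫ t in (-1:ℝ)..1, y t) = 0 →
        |y 0| ≤ B * Real.sqrt (∫ t in (-1:ℝ)..1, (g t) ^ 2)) →
      Real.sqrt 6 / 6 ≤ B) ∧
    (∀ y g : ℝ → ℝ, W12 y g → (∫ t in (-1:ℝ)..1, y t) = 0 →
      (∫ t in (-1:ℝ)..1, t * y t) = 0 →
      |y 0| ≤ Real.sqrt 6 / 6 * Real.sqrt (∫ t in (-1:ℝ)..1, (g t) ^ 2)) ∧
    (∀ B : ℝ,
      (∀ y g : ℝ → ℝ, W12 y g → (∫ t in (-1:ℝ)..1, y t) = 0 →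
        (∫ t in (-1:ℝ)..1, t * y t) = 0 →
        |y 0| ≤ B * Real.sqrt (∫ t in (-1:ℝ)..1, (g t) ^ 2)) →
      Real.sqrt 6 / 6 ≤ B) := by
  refine ⟨fun y g h h0 => upper_bound h h0,
    fun B hB => lower_bound B (fun y g hw h0 _ => hB y g hw h0),
    fun y g h h0 _ => upper_bound h h0,
    lower_bound⟩
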